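/- Let O ⊆ ℝ × ℝ^m be open and let G : O → ℝ^m be differentiable, satisfying for all (t,x) ∈ O and all i ∈ [m] the implicit system G_i(t,x) = e^{−x_i} · exp( t ∑_{l=1}^m A_{il} p_l (G_l(t,x) − 1) ). Then at every (t,x) ∈ O the following matrix identities hold: (I − t·diag(G(t,x))·A·P) · ∂G/∂t (t,x) = diag(G(t,x))·A·P·(G(t,x) − 𝟙), and (I − t·diag(G(t,x))·A·P) · ∇G(t,x) = −diag(G(t,x)), where ∇G is the Jacobian of G in x and 𝟙 = (1,…,1)ᵀ. -/

import Mathlib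

/-- Partial derivative in the time variable of a map `G : ℝ × ℝ^m → ℝ^m` (componentwise). -/
noncomputable def pderivT {m : ℕ} (G : ℝ → (Fin m → ℝ) → Fin m → ℝ)
    (t : ℝ) (x : Fin m → ℝ) (i : Fin m) : ℝ :=
  fderiv ℝ (fun q : ℝ × (Fin m → ℝ) => G q.1 q.2 i) (t, x) (1, 0)

/-- Partial derivative in the `j`-th spatial variable of a map `G : ℝ × ℝ^m → ℝ^m`. -/
noncomputable def pderivX {m : ℕ} (G : ℝ → (Fin m → ℝ) → Fin m → ℝ)
    (t : ℝ) (x : Fin m → ℝ) (i j : Fin m) : ℝ :=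
  fderiv ℝ (fun q : ℝ × (Fin m → ℝ) => G q.1 q.2 i) (t, x) (0, Pi.single j 1)

/-- A differentiable solution of the implicit system
`G_i = e^{-x_i} exp(t ∑_l A_{il} p_l (G_l - 1))` on an open set satisfies the matrix
identities `(I - t·diag(G)·A·P) ∂G/∂t = diag(G)·A·P·(G - 𝟙)` and
`(I - t·diag(G)·A·P) ∇G = -diag(G)`. -/
theorem implicit_system_matrix_identities
    (m : ℕ) (hm : 1 ≤ m)
    (A : Matrix (Fin m) (Fin m) ℝ) (hAsymm : A.IsSymm) (hA0 : ∀ i j, 0 ≤ A i j)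
    (p : Fin m → ℝ) (hp0 : ∀ i, 0 ≤ p i) (hp1 : ∑ i, p i = 1)
    (O : Set (ℝ × (Fin m → ℝ))) (hO : IsOpen O)
    (G : ℝ → (Fin m → ℝ) → Fin m → ℝ)
    (hGdiff : ∀ t : ℝ, ∀ x : Fin m → ℝ, (t, x) ∈ O → ∀ i : Fin m,
      DifferentiableAt ℝ (fun q : ℝ × (Fin m → ℝ) => G q.1 q.2 i) (t, x))
    (hGfix : ∀ t : ℝ, ∀ x : Fin m → ℝ, (t, x) ∈ O → ∀ i : Fin m,
      G t x i = Real.exp (-x i) *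
        Real.exp (t * ∑ l, A i l * p l * (G t x l - 1))) :
    ∀ t : ℝ, ∀ x : Fin m → ℝ, (t, x) ∈ O →
      (((1 : Matrix (Fin m) (Fin m) ℝ)
          - t • (Matrix.diagonal (G t x) * A * Matrix.diagonal p)).mulVec
            (fun i => pderivT G t x i)
        = (Matrix.diagonal (G t x) * A * Matrix.diagonal p).mulVec
            (fun i => G t x i - 1))
      ∧
      (((1 : Matrix (Fin m) (Fin m) ℝ)
          - t • (Matrix.diagonal (G t x) * A * Matrix.diagonal p))
          * Matrix.of (fun i j => pderivX G t x i j)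
        = -Matrix.diagonal (G t x)) := by
  intro t x hmem
  set D : Fin m → (ℝ × (Fin m → ℝ)) →L[ℝ] ℝ :=
    fun l => fderiv ℝ (fun q : ℝ × (Fin m → ℝ) => G q.1 q.2 l) (t, x) with hD
  have key : ∀ i : Fin m, ∀ v : ℝ × (Fin m → ℝ),
      D i v = G t x i * (-(v.2 i) + v.1 * (∑ l, A i l * p l * (G t x l - 1))
        + t * ∑ l, A i l * p l * (D l v)) := by
    intro i v
    have h1 : ∀ l, HasFDerivAt (fun q : ℝ × (Fin m → ℝ) => G q.1 q.2 l) (D l) (t, x) :=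
      fun l => (hGdiff t x hmem l).hasFDerivAt
    have hsum : HasFDerivAt
        (fun q : ℝ × (Fin m → ℝ) => ∑ l, A i l * p l * (G q.1 q.2 l - 1))
        (∑ l, (A i l * p l) • D l) (t, x) := by
      apply HasFDerivAt.fun_sum
      intro l _
      exact ((h1 l).sub_const 1).const_mul _
    have hfst : HasFDerivAt (fun q : ℝ × (Fin m → ℝ) => q.1)
        (ContinuousLinearMap.fst ℝ ℝ (Fin m → ℝ)) (t, x) := hasFDerivAt_fst
    have hmul := hfst.mul hsum
    have hsnd : HasFDerivAt (fun q : ℝ × (Fin m → ℝ) => q.2 i)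
        ((ContinuousLinearMap.proj i).comp (ContinuousLinearMap.snd ℝ ℝ (Fin m → ℝ)))
        (t, x) :=
      ((ContinuousLinearMap.proj i).comp
        (ContinuousLinearMap.snd ℝ ℝ (Fin m → ℝ))).hasFDerivAt
    have hF := hsnd.neg.add hmul
    have hexp := (Real.hasDerivAt_exp
      (-(t, x).2 i + (t, x).1 * ∑ l, A i l * p l * (G (t, x).1 (t, x).2 l - 1))).comp_hasFDerivAt
      (t, x) hF
    have heq : (fun q : ℝ × (Fin m → ℝ) => G q.1 q.2 i) =ᶠ[nhds (t, x)]
        (fun q : ℝ × (Fin m → ℝ) =>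
          Real.exp (-q.2 i + q.1 * ∑ l, A i l * p l * (G q.1 q.2 l - 1))) := by
      filter_upwards [hO.mem_nhds hmem] with q hq
      rw [hGfix q.1 q.2 hq i, ← Real.exp_add]
    have hG' : HasFDerivAt (fun q : ℝ × (Fin m → ℝ) => G q.1 q.2 i)
        (Real.exp (-(t, x).2 i + (t, x).1 * ∑ l, A i l * p l * (G (t, x).1 (t, x).2 l - 1)) •
          ((-((ContinuousLinearMap.proj i).comp
              (ContinuousLinearMap.snd ℝ ℝ (Fin m → ℝ)))) +
            ((t, x).1 • (∑ l, (A i l * p l) • D l) +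
              (∑ l, A i l * p l * (G (t, x).1 (t, x).2 l - 1)) •
                ContinuousLinearMap.fst ℝ ℝ (Fin m → ℝ)))) (t, x) :=
      hexp.congr_of_eventuallyEq heq
    have hval : Real.exp (-(t, x).2 i +
        (t, x).1 * ∑ l, A i l * p l * (G (t, x).1 (t, x).2 l - 1)) = G t x i := by
      rw [hGfix t x hmem i, ← Real.exp_add]
    have hDi := hG'.fderiv
    simp only [hD]
    rw [hDi, hval]
    simp only [ContinuousLinearMap.smul_apply, ContinuousLinearMap.add_apply,
      ContinuousLinearMap.neg_apply, ContinuousLinearMap.comp_apply,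
      ContinuousLinearMap.proj_apply, ContinuousLinearMap.coe_sum',
      ContinuousLinearMap.coe_fst', ContinuousLinearMap.coe_snd',
      Finset.sum_apply, smul_eq_mul]
    ring
  set M : Matrix (Fin m) (Fin m) ℝ :=
    Matrix.diagonal (G t x) * A * Matrix.diagonal p with hMdef
  have hM : ∀ i l : Fin m, M i l = G t x i * A i l * p l := by
    intro i l
    simp [hMdef, Matrix.mul_diagonal, Matrix.diagonal_mul]
  constructor
  · funext i
    have keyT := key i (1, (0 : Fin m → ℝ))
    simp only [Pi.zero_apply, neg_zero, one_mul, zero_add] at keyT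
    have hpT : ∀ l, pderivT G t x l = D l (1, (0 : Fin m → ℝ)) := fun l => rfl
    rw [Matrix.sub_mulVec, Matrix.one_mulVec, Matrix.smul_mulVec]
    simp only [Pi.sub_apply, Pi.smul_apply, smul_eq_mul, Matrix.mulVec, dotProduct]
    have e1 : ∑ l, M i l * pderivT G t x l
        = G t x i * ∑ l, A i l * p l * (D l (1, (0 : Fin m → ℝ))) := by
      rw [Finset.mul_sum]
      refine Finset.sum_congr rfl fun l _ => ?_
      rw [hM, hpT]; ring
    have e2 : ∑ l, M i l * (G t x l - 1)
        = G t x i * ∑ l, A i l * p l * (G t x l - 1) := by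
      rw [Finset.mul_sum]
      refine Finset.sum_congr rfl fun l _ => ?_
      rw [hM]; ring
    rw [e1, e2, hpT, keyT]
    ring
  · ext i j
    have keyX := key i ((0 : ℝ), Pi.single j (1 : ℝ))
    have hpX : ∀ l, pderivX G t x l j = D l ((0 : ℝ), Pi.single j (1 : ℝ)) := fun l => rfl
    rw [Matrix.sub_mul, Matrix.one_mul, Matrix.smul_mul]
    simp only [Matrix.sub_apply, Matrix.smul_apply, smul_eq_mul, Matrix.of_apply,
      Matrix.neg_apply, Matrix.mul_apply, Matrix.diagonal_apply]
    have e1 : ∑ l, M i l * pderivX G t x l j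
        = G t x i * ∑ l, A i l * p l * (D l ((0 : ℝ), Pi.single j (1 : ℝ))) := by
      rw [Finset.mul_sum]
      refine Finset.sum_congr rfl fun l _ => ?_
      rw [hM, hpX]; ring
    rw [e1, hpX, keyX]
    simp only [zero_mul, add_zero, zero_add, Pi.single_apply]
    by_cases h : i = j <;> simp [h] <;> ring
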